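/- Crux identification lemma for the second-stage outcome regression: under Assumptions NI and POS, E[1{A=a}·(1−R)·Y | 𝓛] = M_S·E[1{A=a}·(1−R) | 𝓛] almost everywhere; that is, among subjects whose outcome is initially missing, the conditional mean of Y given (L, A = a) coincides with the double-sample outcome regression μ_{a,S}(L) = E(Y | L, A = a, S = 1). -/

import Mathlib

open MeasureTheory Filter Topology

/-- Doob–Dynkin factorization for real-valued functions. -/
lemma exists_measurable_factor {Ω β : Type*} [mβ : MeasurableSpace β] (T : Ω → β)
    {f : Ω → ℝ} (hf : Measurable[mβ.comap T] f) :
    ∃ φ : β → ℝ, Measurable φ ∧ f = φ ∘ T := by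
  -- first: simple functions factor
  have hsf : ∀ g : @SimpleFunc Ω (mβ.comap T) ℝ, ∃ φ : β → ℝ, Measurable φ ∧ ⇑g = φ ∘ T := by
    intro g
    refine @SimpleFunc.induction Ω ℝ (mβ.comap T) _
      (fun g => ∃ φ : β → ℝ, Measurable φ ∧ ⇑g = φ ∘ T) ?_ ?_ g
    · intro c s hs
      obtain ⟨B, hB, rfl⟩ := hs
      refine ⟨B.indicator fun _ => c, measurable_const.indicator hB, ?_⟩
      ext ω
      by_cases h : T ω ∈ B <;>
        (classical change Set.piecewise (T ⁻¹' B) (fun _ => c) (fun _ => (0:ℝ)) ω = _; simp [Set.piecewise, Set.indicator, Set.mem_preimage, h])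
    · rintro g₁ g₂ _ ⟨φ₁, hφ₁, h₁⟩ ⟨φ₂, hφ₂, h₂⟩
      exact ⟨φ₁ + φ₂, hφ₁.add hφ₂, by ext ω; simp only [SimpleFunc.coe_add, Pi.add_apply, h₁, h₂, Function.comp_apply]⟩
  have hsm : StronglyMeasurable[mβ.comap T] f := hf.stronglyMeasurable
  set gn := hsm.approx with hgn
  choose φn hφn hfac using fun n => hsf (gn n)
  -- limit construction
  set s : Set β := {y | ∃ c, Tendsto (fun n => φn n y) atTop (𝓝 c)} with hs
  have hs_meas : MeasurableSet s := measurableSet_exists_tendsto hφn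
  set ψn : ℕ → β → ℝ := fun n => s.indicator (φn n) with hψn
  have hψn_meas : ∀ n, Measurable (ψn n) := fun n => (hφn n).indicator hs_meas
  have hconv : ∀ y, ∃ c, Tendsto (fun n => ψn n y) atTop (𝓝 c) := by
    intro y
    by_cases hy : y ∈ s
    · have hy' : ∀ n, ψn n y = φn n y := fun n => Set.indicator_of_mem hy _
      obtain ⟨c, hc⟩ := hy
      exact ⟨c, by simpa [hy'] using hc⟩
    · exact ⟨0, by simp [hψn, Set.indicator_of_notMem hy, tendsto_const_nhds]⟩
  set φ : β → ℝ := fun y => (hconv y).choose with hφ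
  have hφ_tendsto : ∀ y, Tendsto (fun n => ψn n y) atTop (𝓝 (φ y)) :=
    fun y => (hconv y).choose_spec
  have hφ_meas : Measurable φ := measurable_of_tendsto_metrizable hψn_meas
    (tendsto_pi_nhds.mpr hφ_tendsto)
  refine ⟨φ, hφ_meas, funext fun ω => ?_⟩
  have h1 : Tendsto (fun n => gn n ω) atTop (𝓝 (f ω)) := hsm.tendsto_approx ω
  have h2 : ∀ n, gn n ω = φn n (T ω) := fun n => congrFun (hfac n) ω
  have hTs : T ω ∈ s := ⟨f ω, by simpa [← h2] using h1⟩
  have h3 : Tendsto (fun n => ψn n (T ω)) atTop (𝓝 (f ω)) := by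
    simpa [hψn, Set.indicator_of_mem hTs, ← h2] using h1
  exact tendsto_nhds_unique h3 (hφ_tendsto (T ω))

theorem second_stage_outcome_regression_identification
    {Ω : Type*} [MeasurableSpace Ω] (P : Measure Ω) [IsProbabilityMeasure P]
    {d : ℕ} (L : Ω → (Fin d → ℝ)) (A R S Y : Ω → ℝ)
    (hL : Measurable L) (hA : Measurable A) (hR : Measurable R)
    (hS : Measurable S) (hY : Integrable Y P)
    (hA01 : ∀ ω, A ω = 0 ∨ A ω = 1)
    (hR01 : ∀ ω, R ω = 0 ∨ R ω = 1)
    (hS01 : ∀ ω, S ω = 0 ∨ S ω = 1)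
    (hSR : ∀ ω, S ω * R ω = 0)
    (a : ℝ) (ha : a = 0 ∨ a = 1)
    (𝓛 : MeasurableSpace Ω) (h𝓛 : 𝓛 = MeasurableSpace.comap L inferInstance)
    (𝓖R : MeasurableSpace Ω)
    (h𝓖R : 𝓖R = MeasurableSpace.comap (fun ω => (L ω, A ω, R ω)) inferInstance)
    (ind : Ω → ℝ) (hind : ind = fun ω => if A ω = a then (1:ℝ) else 0)
    -- arm-a nuisance random variables
    (π Γ H M_S : Ω → ℝ)
    (hπ_meas : Measurable[𝓛] π) (hπ_int : Integrable π P)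
    (hΓ_meas : Measurable[𝓛] Γ) (hΓ_int : Integrable Γ P)
    (hH_meas : Measurable[𝓛] H) (hH_int : Integrable H P)
    (hMS_meas : Measurable[𝓛] M_S) (hMS_int : Integrable M_S P)
    (hπ01 : ∀ ω, 0 ≤ π ω ∧ π ω ≤ 1)
    (hΓ01 : ∀ ω, 0 ≤ Γ ω ∧ Γ ω ≤ 1)
    (hH01 : ∀ ω, 0 ≤ H ω ∧ H ω ≤ 1)
    -- characterizations
    (hπ : P[ind | 𝓛] =ᵐ[P] π)
    (hΓ : P[fun ω => ind ω * R ω | 𝓛] =ᵐ[P] fun ω => Γ ω * π ω)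
    (hH : P[fun ω => ind ω * S ω | 𝓛]
      =ᵐ[P] fun ω => H ω * (P[fun ω' => ind ω' * (1 - R ω') | 𝓛]) ω)
    (hMS : P[fun ω => ind ω * S ω * Y ω | 𝓛]
      =ᵐ[P] fun ω => M_S ω * (H ω * ((1 - Γ ω) * π ω)))
    -- Assumption NI
    (hNI : ∀ f : ℝ → ℝ, Measurable f → (∃ B, ∀ x, |f x| ≤ B) →
      ∀ᵐ ω ∂P, R ω = 0 →
        (P[fun ω' => S ω' * f (Y ω') | 𝓖R]) ω
          = (P[S | 𝓖R]) ω * (P[fun ω' => f (Y ω') | 𝓖R]) ω)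
    (hNIid : ∀ᵐ ω ∂P, R ω = 0 →
      (P[fun ω' => S ω' * Y ω' | 𝓖R]) ω = (P[S | 𝓖R]) ω * (P[Y | 𝓖R]) ω)
    -- Assumption POS
    (ε : ℝ) (hε : 0 < ε)
    (hPOS : ∀ᵐ ω ∂P, R ω = 0 → ε ≤ (P[S | 𝓖R]) ω) :
    P[fun ω => ind ω * (1 - R ω) * Y ω | 𝓛]
      =ᵐ[P] fun ω => M_S ω * (P[fun ω' => ind ω' * (1 - R ω') | 𝓛]) ω := by
  rename_i m0 instP
  subst h𝓖R
  subst h𝓛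
  -- σ-algebra order facts
  have hT : Measurable[m0] fun ω => (L ω, A ω, R ω) := hL.prodMk (hA.prodMk hR)
  have hG_le : MeasurableSpace.comap (fun ω => (L ω, A ω, R ω)) inferInstance ≤ m0 :=
    hT.comap_le
  have hLle : MeasurableSpace.comap L inferInstance ≤ m0 := hL.comap_le
  have hLG : MeasurableSpace.comap L inferInstance
      ≤ MeasurableSpace.comap (fun ω => (L ω, A ω, R ω)) inferInstance := by
    have h1 : L = (fun p : (Fin d → ℝ) × ℝ × ℝ => p.1) ∘ fun ω => (L ω, A ω, R ω) := rfl
    rw [h1, ← MeasurableSpace.comap_comp]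
    exact MeasurableSpace.comap_mono measurable_fst.comap_le
  -- measurability wrt 𝓖R
  have hT_G : Measurable[MeasurableSpace.comap (fun ω => (L ω, A ω, R ω)) inferInstance] fun ω => (L ω, A ω, R ω) :=
    Measurable.of_comap_le le_rfl
  have hA_G : Measurable[MeasurableSpace.comap (fun ω => (L ω, A ω, R ω)) inferInstance] A := (measurable_fst.comp measurable_snd).comp hT_G
  have hR_G : Measurable[MeasurableSpace.comap (fun ω => (L ω, A ω, R ω)) inferInstance] R := (measurable_snd.comp measurable_snd).comp hT_G
  have hL_L : Measurable[MeasurableSpace.comap L inferInstance] L :=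
    Measurable.of_comap_le le_rfl
  have hind_m : Measurable[m0] ind := by
    rw [hind]; exact Measurable.ite (hA (measurableSet_singleton a)) measurable_const
      measurable_const
  have hind_G : Measurable[MeasurableSpace.comap (fun ω => (L ω, A ω, R ω)) inferInstance] ind := by
    rw [hind]; exact Measurable.ite (hA_G (measurableSet_singleton a)) measurable_const
      measurable_const
  have hind01 : ∀ ω, ind ω = 0 ∨ ind ω = 1 := by
    intro ω; rw [hind]; by_cases h : A ω = a <;> simp [h]
  -- the weight W
  have hW_G : Measurable[MeasurableSpace.comap (fun ω => (L ω, A ω, R ω)) inferInstance] (fun ω => ind ω * (1 - R ω)) :=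
    hind_G.mul (measurable_const.sub hR_G)
  have hW_m : Measurable[m0] (fun ω => ind ω * (1 - R ω)) := hind_m.mul (measurable_const.sub hR)
  have hW01 : ∀ ω, ind ω * (1 - R ω) = 0 ∨ ind ω * (1 - R ω) = 1 := by
    intro ω; rcases hind01 ω with h | h <;> rcases hR01 ω with h' | h' <;> simp [h, h']
  have hW_nonneg : ∀ ω, 0 ≤ ind ω * (1 - R ω) := by
    intro ω; rcases hW01 ω with h | h <;> simp [h]
  have habs : ∀ {f : Ω → ℝ}, (∀ ω, f ω = 0 ∨ f ω = 1) → ∀ ω, |f ω| ≤ 1 := by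
    intro f h ω; rcases h ω with h' | h' <;> simp [h']
  -- integrability of bounded measurable functions
  have hbdd_int : ∀ {f : Ω → ℝ}, Measurable[m0] f → (∀ ω, |f ω| ≤ 1) → Integrable f P := by
    intro f hm hb
    exact (integrable_const (1:ℝ)).mono' hm.aestronglyMeasurable
      (ae_of_all _ fun ω => by simpa [Real.norm_eq_abs] using hb ω)
  have hS_int : Integrable S P := hbdd_int hS (habs hS01)
  have hind_int : Integrable ind P := hbdd_int hind_m (habs hind01)
  have hW_int : Integrable (fun ω => ind ω * (1 - R ω)) P := hbdd_int hW_m (habs hW01)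
  have hindR_int : Integrable (fun ω => ind ω * R ω) P := by
    refine hbdd_int (hind_m.mul hR) fun ω => ?_
    rcases hind01 ω with h | h <;> rcases hR01 ω with h' | h' <;> simp [h, h']
  have hindS_int : Integrable (fun ω => ind ω * S ω) P := by
    refine hbdd_int (hind_m.mul hS) fun ω => ?_
    rcases hind01 ω with h | h <;> rcases hS01 ω with h' | h' <;> simp [h, h']
  have hSY_int : Integrable (fun ω => S ω * Y ω) P :=
    hY.bdd_mul hS.aestronglyMeasurable (c := 1) (ae_of_all _ fun ω => by simpa [Real.norm_eq_abs] using habs hS01 ω)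
  have hWY_int : Integrable (fun ω => ind ω * (1 - R ω) * Y ω) P :=
    hY.bdd_mul hW_m.aestronglyMeasurable
      (c := 1) (ae_of_all _ fun ω => by rw [Real.norm_eq_abs]; exact habs hW01 ω)
  have hindSY_int : Integrable (fun ω => ind ω * (S ω * Y ω)) P :=
    hSY_int.bdd_mul hind_m.aestronglyMeasurable
      (c := 1) (ae_of_all _ fun ω => by simpa [Real.norm_eq_abs] using habs hind01 ω)
  -- pull-out helper
  have pull : ∀ {m : MeasurableSpace Ω}, m ≤ m0 → ∀ {f u : Ω → ℝ},
      StronglyMeasurable[m] f → Integrable u P → (∀ ω, |f ω| ≤ 1) →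
      P[fun ω => f ω * u ω|m] =ᵐ[P] fun ω => f ω * (P[u|m]) ω := by
    intro m hm f u hf hu hb
    have hfu : Integrable (fun ω => f ω * u ω) P :=
      hu.bdd_mul (hf.mono hm).measurable.aestronglyMeasurable
        (c := 1) (ae_of_all _ fun ω => by simpa [Real.norm_eq_abs] using hb ω)
    exact condExp_mul_of_stronglyMeasurable_left hf hfu hu
  -- ae bounds for the conditional expectation of S
  have hch01 : ∀ᵐ ω ∂P, 0 ≤ (P[S|MeasurableSpace.comap (fun ω => (L ω, A ω, R ω)) inferInstance]) ω ∧ (P[S|MeasurableSpace.comap (fun ω => (L ω, A ω, R ω)) inferInstance]) ω ≤ 1 := by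
    have h0 : 0 ≤ᵐ[P] P[S|MeasurableSpace.comap (fun ω => (L ω, A ω, R ω)) inferInstance] :=
      condExp_nonneg (ae_of_all _ fun ω => by rcases hS01 ω with h | h <;> simp [h])
    have h1 : P[S|MeasurableSpace.comap (fun ω => (L ω, A ω, R ω)) inferInstance] ≤ᵐ[P] P[(fun _ => (1:ℝ))|MeasurableSpace.comap (fun ω => (L ω, A ω, R ω)) inferInstance] :=
      condExp_mono hS_int (integrable_const 1)
        (ae_of_all _ fun ω => by rcases hS01 ω with h | h <;> simp [h])
    have h2 : P[(fun _ => (1:ℝ))|MeasurableSpace.comap (fun ω => (L ω, A ω, R ω)) inferInstance] = fun _ => (1:ℝ) := condExp_const hG_le 1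
    filter_upwards [h0, h1] with ω hω0 hω1
    refine ⟨hω0, ?_⟩
    have := hω1
    rw [h2] at this
    exact this
  -- R kills the conditional expectations of S and S·Y
  have hRch : ∀ᵐ ω ∂P, R ω * (P[S|MeasurableSpace.comap (fun ω => (L ω, A ω, R ω)) inferInstance]) ω = 0 := by
    have h1 : P[fun ω => R ω * S ω|MeasurableSpace.comap (fun ω => (L ω, A ω, R ω)) inferInstance] =ᵐ[P] fun ω => R ω * (P[S|MeasurableSpace.comap (fun ω => (L ω, A ω, R ω)) inferInstance]) ω :=
      pull hG_le hR_G.stronglyMeasurable hS_int (habs hR01)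
    have h2 : (fun ω => R ω * S ω) = fun _ => (0:ℝ) := by
      funext ω; rw [mul_comm]; exact hSR ω
    have h3 : P[fun ω => R ω * S ω|MeasurableSpace.comap (fun ω => (L ω, A ω, R ω)) inferInstance] = fun _ => (0:ℝ) := by
      rw [h2]; exact condExp_const hG_le 0
    filter_upwards [h1] with ω e1
    rw [← e1, h3]
  have hRck : ∀ᵐ ω ∂P, R ω * (P[fun ω' => S ω' * Y ω'|MeasurableSpace.comap (fun ω => (L ω, A ω, R ω)) inferInstance]) ω = 0 := by
    have h1 : P[fun ω => R ω * (S ω * Y ω)|MeasurableSpace.comap (fun ω => (L ω, A ω, R ω)) inferInstance]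
        =ᵐ[P] fun ω => R ω * (P[fun ω' => S ω' * Y ω'|MeasurableSpace.comap (fun ω => (L ω, A ω, R ω)) inferInstance]) ω :=
      pull hG_le hR_G.stronglyMeasurable hSY_int (habs hR01)
    have h2 : (fun ω => R ω * (S ω * Y ω)) = fun _ => (0:ℝ) := by
      funext ω; rw [← mul_assoc, mul_comm (R ω) (S ω), hSR ω, zero_mul]
    have h3 : P[fun ω => R ω * (S ω * Y ω)|MeasurableSpace.comap (fun ω => (L ω, A ω, R ω)) inferInstance] = fun _ => (0:ℝ) := by
      rw [h2]; exact condExp_const hG_le 0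
    filter_upwards [h1] with ω e1
    rw [← e1, h3]
  -- Doob–Dynkin factorization of P[S|MeasurableSpace.comap (fun ω => (L ω, A ω, R ω)) inferInstance]
  have hch_G : Measurable[MeasurableSpace.comap (fun ω => (L ω, A ω, R ω)) inferInstance] (P[S|MeasurableSpace.comap (fun ω => (L ω, A ω, R ω)) inferInstance]) := stronglyMeasurable_condExp.measurable
  obtain ⟨φ, hφ_meas, hφ⟩ := exists_measurable_factor (fun ω => (L ω, A ω, R ω)) hch_G
  set ψ : Ω → ℝ := fun ω => max 0 (min (φ (L ω, a, 0)) 1) with hψdef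
  have hψ_L : Measurable[MeasurableSpace.comap L inferInstance] ψ := by
    have hmap : Measurable[MeasurableSpace.comap L inferInstance] fun ω => ((L ω, a, 0) : (Fin d → ℝ) × ℝ × ℝ) :=
      hL_L.prodMk (measurable_const.prodMk measurable_const)
    exact measurable_const.max ((hφ_meas.comp hmap).min measurable_const)
  have hψ01 : ∀ ω, 0 ≤ ψ ω ∧ ψ ω ≤ 1 := fun ω =>
    ⟨le_max_left _ _, max_le (by norm_num) (min_le_right _ _)⟩
  have hψabs : ∀ ω, |ψ ω| ≤ 1 := fun ω => abs_le.mpr ⟨by linarith [(hψ01 ω).1], (hψ01 ω).2⟩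
  -- on the event of interest, P[S|MeasurableSpace.comap (fun ω => (L ω, A ω, R ω)) inferInstance] coincides with ψ
  have hWh : ∀ᵐ ω ∂P, ind ω * (1 - R ω) * (P[S|MeasurableSpace.comap (fun ω => (L ω, A ω, R ω)) inferInstance]) ω = ind ω * (1 - R ω) * ψ ω := by
    filter_upwards [hch01] with ω hc
    by_cases hw : ind ω * (1 - R ω) = 0
    · rw [hw, zero_mul, zero_mul]
    · have hAa : A ω = a := by
        by_contra hA'
        apply hw
        rw [hind]
        simp [hA']
      have hR0 : R ω = 0 := by
        rcases hR01 ω with h | h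
        · exact h
        · exact absurd (by rw [h]; ring) hw
      have hchω : (P[S|MeasurableSpace.comap (fun ω => (L ω, A ω, R ω)) inferInstance]) ω = φ (L ω, a, 0) := by
        have h5 := congrFun hφ ω
        rw [Function.comp_apply, hAa, hR0] at h5
        exact h5
      have hpsi : ψ ω = (P[S|MeasurableSpace.comap (fun ω => (L ω, A ω, R ω)) inferInstance]) ω := by
        rw [hψdef]
        simp only []
        rw [← hchω, min_eq_left hc.2, max_eq_right hc.1]
      rw [hpsi]
  -- tower property
  have tower : ∀ u : Ω → ℝ, P[u|MeasurableSpace.comap L inferInstance] =ᵐ[P] P[P[u|MeasurableSpace.comap (fun ω => (L ω, A ω, R ω)) inferInstance]|MeasurableSpace.comap L inferInstance] :=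
    fun u => (condExp_condExp_of_le hLG hG_le).symm
  have hWcg_int : Integrable (fun ω => ind ω * (1 - R ω) * (P[Y|MeasurableSpace.comap (fun ω => (L ω, A ω, R ω)) inferInstance]) ω) P :=
    integrable_condExp.bdd_mul hW_m.aestronglyMeasurable
      (c := 1) (ae_of_all _ fun ω => by rw [Real.norm_eq_abs]; exact habs hW01 ω)
  -- Step A: the LHS via the tower property
  have hA1 : P[fun ω => ind ω * (1 - R ω) * Y ω|MeasurableSpace.comap (fun ω => (L ω, A ω, R ω)) inferInstance]
      =ᵐ[P] fun ω => ind ω * (1 - R ω) * (P[Y|MeasurableSpace.comap (fun ω => (L ω, A ω, R ω)) inferInstance]) ω :=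
    pull hG_le hW_G.stronglyMeasurable hY (habs hW01)
  have hA2 : P[fun ω => ind ω * (1 - R ω) * Y ω|MeasurableSpace.comap L inferInstance]
      =ᵐ[P] P[fun ω => ind ω * (1 - R ω) * (P[Y|MeasurableSpace.comap (fun ω => (L ω, A ω, R ω)) inferInstance]) ω|MeasurableSpace.comap L inferInstance] :=
    (tower _).trans (condExp_congr_ae hA1)
  -- Step B: the double-sampled outcome moment
  have hB1 : P[fun ω => ind ω * S ω * Y ω|MeasurableSpace.comap L inferInstance]
      =ᵐ[P] P[fun ω => ind ω * ((P[fun ω' => S ω' * Y ω'|MeasurableSpace.comap (fun ω => (L ω, A ω, R ω)) inferInstance]) ω)|MeasurableSpace.comap L inferInstance] := by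
    have h0 : (fun ω => ind ω * S ω * Y ω) = fun ω => ind ω * (S ω * Y ω) :=
      funext fun ω => mul_assoc _ _ _
    rw [h0]
    exact (tower _).trans (condExp_congr_ae
      (pull hG_le hind_G.stronglyMeasurable hSY_int (habs hind01)))
  have hB2 : (fun ω => ind ω * ((P[fun ω' => S ω' * Y ω'|MeasurableSpace.comap (fun ω => (L ω, A ω, R ω)) inferInstance]) ω))
      =ᵐ[P] fun ω => ψ ω * (ind ω * (1 - R ω) * (P[Y|MeasurableSpace.comap (fun ω => (L ω, A ω, R ω)) inferInstance]) ω) := by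
    filter_upwards [hRck, hNIid, hWh] with ω h1 h2 h3
    rcases hR01 ω with hR0 | hR1
    · have hkk := h2 hR0
      rw [hR0] at h3
      rw [hkk, hR0]
      linear_combination (P[Y|MeasurableSpace.comap (fun ω => (L ω, A ω, R ω)) inferInstance]) ω * h3
    · have hck : (P[fun ω' => S ω' * Y ω'|MeasurableSpace.comap (fun ω => (L ω, A ω, R ω)) inferInstance]) ω = 0 := by simpa [hR1] using h1
      rw [hck, hR1]; ring
  have hB3 : P[fun ω => ind ω * S ω * Y ω|MeasurableSpace.comap L inferInstance]
      =ᵐ[P] fun ω => ψ ω * ((P[fun ω => ind ω * (1 - R ω) * (P[Y|MeasurableSpace.comap (fun ω => (L ω, A ω, R ω)) inferInstance]) ω|MeasurableSpace.comap L inferInstance]) ω) := by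
    refine hB1.trans ((condExp_congr_ae hB2).trans ?_)
    exact pull hLle hψ_L.stronglyMeasurable hWcg_int hψabs
  -- Step C: the double-sampling moment
  have hC1 : P[fun ω => ind ω * S ω|MeasurableSpace.comap L inferInstance]
      =ᵐ[P] P[fun ω => ind ω * ((P[S|MeasurableSpace.comap (fun ω => (L ω, A ω, R ω)) inferInstance]) ω)|MeasurableSpace.comap L inferInstance] :=
    (tower _).trans (condExp_congr_ae
      (pull hG_le hind_G.stronglyMeasurable hS_int (habs hind01)))
  have hC2 : (fun ω => ind ω * ((P[S|MeasurableSpace.comap (fun ω => (L ω, A ω, R ω)) inferInstance]) ω))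
      =ᵐ[P] fun ω => ψ ω * (ind ω * (1 - R ω)) := by
    filter_upwards [hRch, hWh] with ω h1 h3
    rcases hR01 ω with hR0 | hR1
    · rw [hR0] at h3
      rw [hR0]
      linear_combination h3
    · have hch : (P[S|MeasurableSpace.comap (fun ω => (L ω, A ω, R ω)) inferInstance]) ω = 0 := by simpa [hR1] using h1
      rw [hch, hR1]; ring
  have hC3 : P[fun ω => ind ω * S ω|MeasurableSpace.comap L inferInstance]
      =ᵐ[P] fun ω => ψ ω * ((P[fun ω' => ind ω' * (1 - R ω')|MeasurableSpace.comap L inferInstance]) ω) := by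
    refine hC1.trans ((condExp_congr_ae hC2).trans ?_)
    exact pull hLle hψ_L.stronglyMeasurable hW_int hψabs
  -- Step D: identification of P[W|𝓛]
  have hD1 : P[fun ω' => ind ω' * (1 - R ω')|MeasurableSpace.comap L inferInstance] =ᵐ[P] fun ω => (1 - Γ ω) * π ω := by
    have hWeq : (fun ω' => ind ω' * (1 - R ω')) = fun ω => ind ω - ind ω * R ω :=
      funext fun ω => by ring
    rw [hWeq]
    have h1 : P[fun ω => ind ω - ind ω * R ω|MeasurableSpace.comap L inferInstance]
        =ᵐ[P] P[ind|MeasurableSpace.comap L inferInstance] - P[fun ω => ind ω * R ω|MeasurableSpace.comap L inferInstance] :=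
      condExp_sub hind_int hindR_int _
    refine h1.trans ?_
    filter_upwards [hπ, hΓ] with ω e2 e3
    simp only [Pi.sub_apply]
    rw [e2, e3]; ring
  -- the key a.e. identity
  have hKey : ∀ᵐ ω ∂P,
      ψ ω * (P[fun ω => ind ω * (1 - R ω) * (P[Y|MeasurableSpace.comap (fun ω => (L ω, A ω, R ω)) inferInstance]) ω|MeasurableSpace.comap L inferInstance]) ω
        = M_S ω * (ψ ω * (P[fun ω' => ind ω' * (1 - R ω')|MeasurableSpace.comap L inferInstance]) ω) := by
    filter_upwards [hB3, hMS, hD1, hH, hC3] with ω e1 e2 e3 e4 e5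
    rw [← e1, e2, ← e3, ← e4, e5]
  -- POS: ψ dominates ε where the conditional probability of the event is positive
  have hεW : ∀ᵐ ω ∂P, ε * (ind ω * (1 - R ω)) ≤ ind ω * (1 - R ω) * ψ ω := by
    filter_upwards [hPOS, hWh] with ω h1 h2
    rcases hW01 ω with h | h
    · rw [h]; simp
    · have hR0 : R ω = 0 := by
        rcases hR01 ω with h' | h'
        · exact h'
        · rw [h'] at h; simp at h
      have hech := h1 hR0
      rw [h] at h2 ⊢
      have h2' : ψ ω = (P[S|MeasurableSpace.comap (fun ω => (L ω, A ω, R ω)) inferInstance]) ω := by linarith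
      rw [h2']
      linarith
  have hεW_int : Integrable (fun ω => ε * (ind ω * (1 - R ω))) P := hW_int.const_mul ε
  have hWψ_int : Integrable (fun ω => ind ω * (1 - R ω) * ψ ω) P := by
    refine hbdd_int (hW_m.mul (hψ_L.mono hLle le_rfl)) fun ω => ?_
    rw [abs_mul]
    exact mul_le_one₀ (habs hW01 ω) (abs_nonneg _) (hψabs ω)
  have hεp : ∀ᵐ ω ∂P, ε * (P[fun ω' => ind ω' * (1 - R ω')|MeasurableSpace.comap L inferInstance]) ω
      ≤ ψ ω * (P[fun ω' => ind ω' * (1 - R ω')|MeasurableSpace.comap L inferInstance]) ω := by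
    have hmono := condExp_mono (μ := P) (m := MeasurableSpace.comap L inferInstance) hεW_int hWψ_int hεW
    have hsm : P[fun ω => ε * (ind ω * (1 - R ω))|MeasurableSpace.comap L inferInstance]
        =ᵐ[P] fun ω => ε * (P[fun ω' => ind ω' * (1 - R ω')|MeasurableSpace.comap L inferInstance]) ω := by
      have h := condExp_smul (μ := P) (m := MeasurableSpace.comap L inferInstance) ε (fun ω' => ind ω' * (1 - R ω'))
      filter_upwards [h] with ω hω
      rw [show (fun ω => ε * (ind ω * (1 - R ω))) = ε • (fun ω' => ind ω' * (1 - R ω')) from rfl]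
      exact hω
    have hpull2 : P[fun ω => ind ω * (1 - R ω) * ψ ω|MeasurableSpace.comap L inferInstance]
        =ᵐ[P] fun ω => ψ ω * (P[fun ω' => ind ω' * (1 - R ω')|MeasurableSpace.comap L inferInstance]) ω := by
      have h0 : (fun ω => ind ω * (1 - R ω) * ψ ω) = fun ω => ψ ω * (ind ω * (1 - R ω)) :=
        funext fun ω => by ring
      rw [h0]
      exact pull hLle hψ_L.stronglyMeasurable hW_int hψabs
    filter_upwards [hmono, hsm, hpull2] with ω e1 e2 e3
    rw [← e2, ← e3]; exact e1
  have hp0 : 0 ≤ᵐ[P] P[fun ω' => ind ω' * (1 - R ω')|MeasurableSpace.comap L inferInstance] :=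
    condExp_nonneg (ae_of_all _ hW_nonneg)
  -- the set where the conditional probability of the event vanishes
  have hpm : Measurable[MeasurableSpace.comap L inferInstance] (P[fun ω' => ind ω' * (1 - R ω')|MeasurableSpace.comap L inferInstance]) :=
    stronglyMeasurable_condExp.measurable
  have hDmL : MeasurableSet[MeasurableSpace.comap L inferInstance] {ω | (P[fun ω' => ind ω' * (1 - R ω')|MeasurableSpace.comap L inferInstance]) ω ≤ 0} :=
    measurableSet_le hpm measurable_const
  have hDm0 : MeasurableSet[m0] {ω | (P[fun ω' => ind ω' * (1 - R ω')|MeasurableSpace.comap L inferInstance]) ω ≤ 0} :=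
    hLle _ hDmL
  have hint0 : ∫ ω in {ω | (P[fun ω' => ind ω' * (1 - R ω')|MeasurableSpace.comap L inferInstance]) ω ≤ 0},
      (ind ω * (1 - R ω)) ∂P = 0 := by
    have hup : ∫ ω in {ω | (P[fun ω' => ind ω' * (1 - R ω')|MeasurableSpace.comap L inferInstance]) ω ≤ 0},
        (ind ω * (1 - R ω)) ∂P ≤ 0 := by
      rw [← setIntegral_condExp hLle hW_int hDmL]
      exact setIntegral_nonpos hDm0 fun ω hω => hω
    have hdown := setIntegral_nonneg (μ := P) hDm0 fun ω _ => hW_nonneg ω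
    linarith
  have hWD : (fun ω => ind ω * (1 - R ω))
      =ᵐ[P.restrict {ω | (P[fun ω' => ind ω' * (1 - R ω')|MeasurableSpace.comap L inferInstance]) ω ≤ 0}] 0 :=
    (setIntegral_eq_zero_iff_of_nonneg_ae (ae_of_all _ hW_nonneg)
      hW_int.integrableOn).mp hint0
  have hWgD : ∀ᵐ ω ∂P, (P[fun ω' => ind ω' * (1 - R ω')|MeasurableSpace.comap L inferInstance]) ω ≤ 0 →
      ind ω * (1 - R ω) * (P[Y|MeasurableSpace.comap (fun ω => (L ω, A ω, R ω)) inferInstance]) ω = 0 := by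
    have h := (ae_restrict_iff' hDm0).mp hWD
    filter_upwards [h] with ω hω hpω
    have h0 : ind ω * (1 - R ω) = 0 := by simpa using hω hpω
    rw [h0, zero_mul]
  have hindic : {ω | (P[fun ω' => ind ω' * (1 - R ω')|MeasurableSpace.comap L inferInstance]) ω ≤ 0}.indicator
      (fun ω => ind ω * (1 - R ω) * (P[Y|MeasurableSpace.comap (fun ω => (L ω, A ω, R ω)) inferInstance]) ω) =ᵐ[P] 0 := by
    filter_upwards [hWgD] with ω h
    by_cases hω : ω ∈ {ω | (P[fun ω' => ind ω' * (1 - R ω')|MeasurableSpace.comap L inferInstance]) ω ≤ 0}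
    · rw [Set.indicator_of_mem hω]
      simpa using h hω
    · simp [Set.indicator_of_notMem hω]
  have hqD : ∀ᵐ ω ∂P, (P[fun ω' => ind ω' * (1 - R ω')|MeasurableSpace.comap L inferInstance]) ω ≤ 0 →
      (P[fun ω => ind ω * (1 - R ω) * (P[Y|MeasurableSpace.comap (fun ω => (L ω, A ω, R ω)) inferInstance]) ω|MeasurableSpace.comap L inferInstance]) ω = 0 := by
    have h1 := condExp_indicator (μ := P) (m := MeasurableSpace.comap L inferInstance) hWcg_int hDmL
    have h2 : P[{ω | (P[fun ω' => ind ω' * (1 - R ω')|MeasurableSpace.comap L inferInstance]) ω ≤ 0}.indicator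
        (fun ω => ind ω * (1 - R ω) * (P[Y|MeasurableSpace.comap (fun ω => (L ω, A ω, R ω)) inferInstance]) ω)|MeasurableSpace.comap L inferInstance] =ᵐ[P] 0 := by
      refine (condExp_congr_ae hindic).trans ?_
      rw [condExp_zero]
    filter_upwards [h1, h2] with ω e1 e2 hω
    have e3 : {ω | (P[fun ω' => ind ω' * (1 - R ω')|MeasurableSpace.comap L inferInstance]) ω ≤ 0}.indicator
        (P[fun ω => ind ω * (1 - R ω) * (P[Y|MeasurableSpace.comap (fun ω => (L ω, A ω, R ω)) inferInstance]) ω|MeasurableSpace.comap L inferInstance]) ω = 0 := by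
      rw [← e1]; simpa using e2
    rw [Set.indicator_of_mem
      (show ω ∈ {ω | (P[fun ω' => ind ω' * (1 - R ω')|MeasurableSpace.comap L inferInstance]) ω ≤ 0} from hω)] at e3
    exact e3
  -- conclusion
  filter_upwards [hA2, hKey, hεp, hp0, hqD] with ω e1 e2 e3 e4 e5
  rw [e1]
  rcases lt_or_eq_of_le e4 with hp | hp
  · have hψε : ε ≤ ψ ω := le_of_mul_le_mul_right e3 hp
    have hψpos : 0 < ψ ω := lt_of_lt_of_le hε hψε
    have h6 : ψ ω * (P[fun ω => ind ω * (1 - R ω) * (P[Y|MeasurableSpace.comap (fun ω => (L ω, A ω, R ω)) inferInstance]) ω|MeasurableSpace.comap L inferInstance]) ω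
        = ψ ω * (M_S ω * (P[fun ω' => ind ω' * (1 - R ω')|MeasurableSpace.comap L inferInstance]) ω) := by
      rw [e2]; ring
    exact mul_left_cancel₀ (ne_of_gt hψpos) h6
  · have hq0 : (P[fun ω => ind ω * (1 - R ω) * (P[Y|MeasurableSpace.comap (fun ω => (L ω, A ω, R ω)) inferInstance]) ω|MeasurableSpace.comap L inferInstance]) ω = 0 :=
      e5 (le_of_eq hp.symm)
    rw [hq0, show (P[fun ω' => ind ω' * (1 - R ω')|MeasurableSpace.comap L inferInstance]) ω = 0
      from hp.symm, mul_zero]
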